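/- arXiv:2002.02034 — 3 statements merged into one kernel-verified Lean document; each statement's English description precedes it below -/
import Mathlib

section
/- Let p be a prime and A an abelian group. Then for all a, b ∈ A, the element Δ(a+b) − Δ(a) − Δ(b) of the p-fold tensor power T = A ⊗_ℤ ⋯ ⊗_ℤ A lies in the image of the norm map N = ∑_{j=0}^{p−1} σ^j : T → T. -/
open scoped TensorProduct

/-- The `p`-fold tensor power `T = A ⊗_ℤ ⋯ ⊗_ℤ A` of an abelian group `A`. -/
noncomputable abbrev tensorPow (p : ℕ) (A : Type*) [AddCommGroup A] : Type _ :=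
  ⨂[ℤ] (_ : Fin p), A

/-- The automorphism `σ : T → T` permuting the tensor factors according to the cyclic
permutation `i ↦ i + 1` of `Fin p`. -/
noncomputable def cyclicPerm (p : ℕ) (A : Type*) [AddCommGroup A] :
    tensorPow p A →ₗ[ℤ] tensorPow p A :=
  (PiTensorProduct.reindex ℤ (fun _ : Fin p => A) (finRotate p)).toLinearMap

/-- The norm (transfer) map `N = ∑_{j=0}^{p-1} σ^j : T → T`. -/
noncomputable def normMap (p : ℕ) (A : Type*) [AddCommGroup A] :
    tensorPow p A →ₗ[ℤ] tensorPow p A :=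
  ∑ j ∈ Finset.range p, (cyclicPerm p A) ^ j

/-- `Δ(a) = a ⊗ a ⊗ ⋯ ⊗ a ∈ T`, the `p`-fold tensor power of the element `a`. -/
noncomputable def diagEl (p : ℕ) (A : Type*) [AddCommGroup A] (a : A) : tensorPow p A :=
  PiTensorProduct.tprod ℤ (fun _ : Fin p => a)

open MulAction

lemma free_action_sum {G : Type*} [Group G] [Fintype G] {α : Type*} [Fintype α]
    [MulAction G α] {M : Type*} [AddCommMonoid M]
    (hfree : ∀ (g : G) (x : α), g • x = x → g = 1) (f : α → M)
    [Fintype (orbitRel.Quotient G α)] :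
    ∑ x : α, f x = ∑ ω : orbitRel.Quotient G α, ∑ g : G, f (g • ω.out) := by
  classical
  rw [← Finset.sum_fiberwise Finset.univ (fun x : α => (⟦x⟧ : orbitRel.Quotient G α)) f]
  refine Finset.sum_congr rfl fun ω _ => ?_
  refine (Finset.sum_bij (fun (g : G) _ => g • ω.out) ?_ ?_ ?_ ?_).symm
  · intro g _
    simp only [Finset.mem_filter, Finset.mem_univ, true_and]
    have : (⟦g • ω.out⟧ : orbitRel.Quotient G α) = ⟦ω.out⟧ :=
      Quotient.sound (orbitRel_apply.2 (mem_orbit _ _))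
    rw [this, Quotient.out_eq]
  · intro g₁ _ g₂ _ h
    have h2 : (g₂⁻¹ * g₁) • ω.out = ω.out := by
      rw [mul_smul, h, inv_smul_smul]
    have h3 := hfree _ _ h2
    have := congrArg (g₂ * ·) h3
    simpa [mul_assoc] using this
  · intro x hx
    simp only [Finset.mem_filter, Finset.mem_univ, true_and] at hx
    have : x ∈ orbit G ω.out := by
      rw [← hx, ]
      exact orbitRel_apply.1 (Quotient.exact (by rw [Quotient.out_eq, hx]))
    obtain ⟨g, hg⟩ := this
    exact ⟨g, Finset.mem_univ _, hg⟩
  · intros; rfl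

namespace DiagAux

/-- The action of `Multiplicative (Fin (n+1))` on subsets of `Fin (n+1)` by translation. -/
instance rotAction (n : ℕ) :
    MulAction (Multiplicative (Fin (n + 1))) (Finset (Fin (n + 1))) where
  smul g s := s.map (Equiv.addRight g.toAdd).toEmbedding
  one_smul s := by
    show s.map _ = s
    ext x
    rw [Finset.mem_map_equiv]
    simp [Equiv.Perm.one_symm, Equiv.Perm.one_apply]
  mul_smul g h s := by
    show s.map _ = (s.map _).map _
    rw [Finset.map_map]
    congr 1
    ext x
    simp [Equiv.addRight, add_assoc, add_comm (Multiplicative.toAdd g)]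

lemma mem_smul_iff {n : ℕ} (g : Multiplicative (Fin (n + 1))) (s : Finset (Fin (n + 1)))
    (x : Fin (n + 1)) : x ∈ g • s ↔ x - g.toAdd ∈ s := by
  show x ∈ s.map _ ↔ _
  rw [Finset.mem_map_equiv]
  simp [Equiv.addRight, sub_eq_add_neg]

lemma smul_ne_empty {n : ℕ} (g : Multiplicative (Fin (n + 1))) {s : Finset (Fin (n + 1))}
    (hs : s ≠ ∅) : g • s ≠ ∅ := by
  show s.map _ ≠ ∅
  simpa using hs

lemma smul_ne_univ {n : ℕ} (g : Multiplicative (Fin (n + 1))) {s : Finset (Fin (n + 1))}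
    (hs : s ≠ Finset.univ) : g • s ≠ Finset.univ := by
  intro h
  apply hs
  apply Finset.eq_univ_of_card
  have := congrArg Finset.card h
  rw [show g • s = s.map (Equiv.addRight g.toAdd).toEmbedding from rfl, Finset.card_map] at this
  simpa using this

/-- The subtype of nonempty proper subsets. -/
instance rotActionSub (n : ℕ) :
    MulAction (Multiplicative (Fin (n + 1)))
      {s : Finset (Fin (n + 1)) // s ≠ ∅ ∧ s ≠ Finset.univ} where
  smul g s := ⟨g • s.val, smul_ne_empty g s.2.1, smul_ne_univ g s.2.2⟩
  one_smul s := by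
    apply Subtype.ext
    show (1 : Multiplicative (Fin (n+1))) • s.val = s.val
    exact one_smul _ _
  mul_smul g h s := by
    apply Subtype.ext
    show (g * h) • s.val = g • h • s.val
    exact mul_smul _ _ _

lemma sub_smul_val {n : ℕ} (g : Multiplicative (Fin (n + 1)))
    (s : {s : Finset (Fin (n + 1)) // s ≠ ∅ ∧ s ≠ Finset.univ}) :
    (g • s).val = g • s.val := rfl

end DiagAux

namespace DiagAux

lemma free_of_prime {n : ℕ} (hp : (n + 1).Prime) (g : Multiplicative (Fin (n + 1)))
    (s : {s : Finset (Fin (n + 1)) // s ≠ ∅ ∧ s ≠ Finset.univ}) (h : g • s = s) : g = 1 := by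
  by_contra hg
  set c := Multiplicative.toAdd g with hc
  have hc0 : c ≠ 0 := fun h0 => hg (by
    have : g = Multiplicative.ofAdd 0 := by rw [← h0]; rfl
    simpa using this)
  have hval : g • s.val = s.val := congrArg Subtype.val h
  have hclosed : ∀ x ∈ s.val, x + c ∈ s.val := by
    intro x hx
    have : x + c ∈ g • s.val ↔ x + c - c ∈ s.val := mem_smul_iff g s.val (x + c)
    rw [hval] at this
    rw [this]
    simpa using hx
  have horder : addOrderOf c = n + 1 := by
    have hd : addOrderOf c ∣ n + 1 := by
      simpa using addOrderOf_dvd_card (x := c)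
    rcases hp.eq_one_or_self_of_dvd _ hd with h1 | h1
    · exact absurd (AddMonoid.addOrderOf_eq_one_iff.mp h1) hc0
    · exact h1
  have key : ∀ k l : Fin (n + 1), k.val ≤ l.val → k.val • c = l.val • c → k = l := by
    intro k l hkl he
    have h2 : l.val • c = (l.val - k.val) • c + k.val • c := by
      rw [← add_nsmul, Nat.sub_add_cancel hkl]
    rw [h2] at he
    have h3 : (l.val - k.val) • c = 0 := by
      have := right_eq_add.mp he
      exact this
    have h4 : addOrderOf c ∣ l.val - k.val := addOrderOf_dvd_of_nsmul_eq_zero h3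
    rw [horder] at h4
    have h5 : l.val - k.val = 0 := by
      by_contra h0
      exact absurd (Nat.le_of_dvd (Nat.pos_of_ne_zero h0) h4) (by omega)
    exact Fin.ext (by omega)
  have hinj : Function.Injective (fun m : Fin (n + 1) => m.val • c) := by
    intro m₁ m₂ he
    rcases le_total m₁.val m₂.val with hle | hle
    · exact key _ _ hle he
    · exact (key _ _ hle he.symm).symm
  have hsurj := Finite.injective_iff_surjective.mp hinj
  obtain ⟨x₀, hx₀⟩ := Finset.nonempty_iff_ne_empty.mpr s.2.1
  have hiter : ∀ m : ℕ, x₀ + m • c ∈ s.val := by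
    intro m
    induction m with
    | zero => simpa using hx₀
    | succ m ih =>
      have := hclosed _ ih
      rwa [succ_nsmul, ← add_assoc]
  apply s.2.2
  apply Finset.eq_univ_iff_forall.mpr
  intro y
  obtain ⟨m, hm⟩ := hsurj (y - x₀)
  simp only at hm
  have : x₀ + m.val • c = y := by rw [hm]; abel
  rw [← this]
  exact hiter m.val

end DiagAux

namespace DiagAux

variable {A : Type*} [AddCommGroup A]

noncomputable def Tel (n : ℕ) (a b : A) (s : Finset (Fin (n + 1))) : tensorPow (n + 1) A :=
  PiTensorProduct.tprod ℤ (fun i => if i ∈ s then a else b)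

lemma Tel_univ (n : ℕ) (a b : A) : Tel n a b Finset.univ = diagEl (n + 1) A a := by
  simp [Tel, diagEl]

lemma Tel_empty (n : ℕ) (a b : A) : Tel n a b ∅ = diagEl (n + 1) A b := by
  simp [Tel, diagEl]

lemma expansion (n : ℕ) (a b : A) :
    diagEl (n + 1) A (a + b) = ∑ s : Finset (Fin (n + 1)), Tel n a b s := by
  classical
  have h := MultilinearMap.map_add_univ
    (PiTensorProduct.tprod ℤ (s := fun _ : Fin (n + 1) => A)) (fun _ => a) (fun _ => b)
  have h2 : diagEl (n + 1) A (a + b) =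
      (PiTensorProduct.tprod ℤ (s := fun _ : Fin (n + 1) => A))
        ((fun _ => a) + (fun _ => b)) := rfl
  rw [h2, h]
  refine Finset.sum_congr rfl fun s _ => ?_
  unfold Tel
  congr 1

lemma cyclic_Tel (n : ℕ) (a b : A) (s : Finset (Fin (n + 1))) :
    cyclicPerm (n + 1) A (Tel n a b s) =
      Tel n a b (Multiplicative.ofAdd (1 : Fin (n + 1)) • s) := by
  show PiTensorProduct.reindex ℤ (fun _ : Fin (n+1) => A) (finRotate (n+1)) _ = _
  unfold Tel
  rw [PiTensorProduct.reindex_tprod]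
  congr 1
  funext i
  have hsymm : (finRotate (n + 1)).symm i = i - 1 := by
    rw [Equiv.symm_apply_eq]
    simp
  rw [hsymm]
  have hmem : i ∈ Multiplicative.ofAdd (1 : Fin (n + 1)) • s ↔ i - 1 ∈ s := by
    simpa using mem_smul_iff (Multiplicative.ofAdd (1 : Fin (n + 1))) s i
  by_cases h : i - 1 ∈ s <;> simp [h, hmem]

lemma pow_Tel (n : ℕ) (a b : A) (s : Finset (Fin (n + 1))) (j : ℕ) :
    (cyclicPerm (n + 1) A ^ j) (Tel n a b s) =
      Tel n a b ((Multiplicative.ofAdd (1 : Fin (n + 1))) ^ j • s) := by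
  induction j with
  | zero => simp
  | succ j ih =>
    rw [pow_succ', Module.End.mul_apply, ih, cyclic_Tel, ← mul_smul, ← pow_succ']

open Fin.NatCast in
lemma norm_Tel (n : ℕ) (a b : A) (s : Finset (Fin (n + 1))) :
    normMap (n + 1) A (Tel n a b s) =
      ∑ g : Multiplicative (Fin (n + 1)), Tel n a b (g • s) := by
  unfold normMap
  rw [LinearMap.coe_sum, Finset.sum_apply]
  have hpow : ∀ j : ℕ, (Multiplicative.ofAdd (1 : Fin (n + 1))) ^ j
      = Multiplicative.ofAdd ((j : Fin (n + 1))) := by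
    intro j
    apply Multiplicative.toAdd.injective
    rw [toAdd_pow]
    simp [nsmul_eq_mul]
  rw [← Fintype.sum_equiv (Multiplicative.ofAdd (α := Fin (n + 1)))
    (fun i : Fin (n + 1) => Tel n a b (Multiplicative.ofAdd i • s))
    (fun g => Tel n a b (g • s))
    (fun i => rfl), ← Fin.sum_univ_eq_sum_range
      (fun j => (cyclicPerm (n + 1) A ^ j) (Tel n a b s))]
  refine Finset.sum_congr rfl fun i _ => ?_
  rw [pow_Tel, hpow, Fin.cast_val_eq_self]

end DiagAux

/-- For a prime `p` and an abelian group `A`, the element `Δ(a+b) − Δ(a) − Δ(b)` of the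
`p`-fold tensor power `T = A ⊗_ℤ ⋯ ⊗_ℤ A` lies in the image of the norm map
`N = ∑_{j=0}^{p−1} σ^j : T → T`. -/
theorem diag_add_sub_mem_norm_image (p : ℕ) (hp : p.Prime) (A : Type*) [AddCommGroup A]
    (a b : A) :
    ∃ x : tensorPow p A,
      normMap p A x = diagEl p A (a + b) - diagEl p A a - diagEl p A b := by
  classical
  obtain ⟨n, rfl⟩ : ∃ n, p = n + 1 := ⟨p - 1, by have := hp.pos; omega⟩
  letI : Fintype (MulAction.orbitRel.Quotient (Multiplicative (Fin (n + 1)))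
      {s : Finset (Fin (n + 1)) // s ≠ ∅ ∧ s ≠ Finset.univ}) := Fintype.ofFinite _
  refine ⟨∑ ω : MulAction.orbitRel.Quotient (Multiplicative (Fin (n + 1)))
      {s : Finset (Fin (n + 1)) // s ≠ ∅ ∧ s ≠ Finset.univ},
      DiagAux.Tel n a b (ω.out).val, ?_⟩
  rw [map_sum]
  have h1 : ∀ ω : MulAction.orbitRel.Quotient (Multiplicative (Fin (n + 1)))
      {s : Finset (Fin (n + 1)) // s ≠ ∅ ∧ s ≠ Finset.univ},
      normMap (n + 1) A (DiagAux.Tel n a b (ω.out).val)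
        = ∑ g : Multiplicative (Fin (n + 1)),
            (fun x : {s : Finset (Fin (n + 1)) // s ≠ ∅ ∧ s ≠ Finset.univ} =>
              DiagAux.Tel n a b x.val) (g • ω.out) := by
    intro ω
    rw [DiagAux.norm_Tel]
    rfl
  rw [Finset.sum_congr rfl fun ω _ => h1 ω,
    ← free_action_sum (DiagAux.free_of_prime hp)
      (fun x : {s : Finset (Fin (n + 1)) // s ≠ ∅ ∧ s ≠ Finset.univ} =>
        DiagAux.Tel n a b x.val)]
  have split : ∑ s : Finset (Fin (n + 1)), DiagAux.Tel n a b s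
      = (∑ x : {s : Finset (Fin (n + 1)) // s ≠ ∅ ∧ s ≠ Finset.univ},
          DiagAux.Tel n a b x.val) + (diagEl (n + 1) A a + diagEl (n + 1) A b) := by
    rw [← Finset.sum_filter_add_sum_filter_not Finset.univ
      (fun s => s ≠ ∅ ∧ s ≠ Finset.univ) (DiagAux.Tel n a b)]
    congr 1
    · exact Finset.sum_subtype _ (by simp) _
    · have hset : Finset.univ.filter
          (fun s : Finset (Fin (n + 1)) => ¬(s ≠ ∅ ∧ s ≠ Finset.univ))
          = {∅, Finset.univ} := by
        ext t
        simp only [Finset.mem_filter, Finset.mem_univ, true_and, Finset.mem_insert,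
          Finset.mem_singleton]
        tauto
      rw [hset, Finset.sum_insert (by
        simp only [Finset.mem_singleton]
        exact fun h => (Finset.univ_nonempty (α := Fin (n + 1))).ne_empty h.symm),
        Finset.sum_singleton, DiagAux.Tel_empty, DiagAux.Tel_univ]
      abel
  rw [DiagAux.expansion n a b, split]
  abel
end

section
/- Let p be a prime and A an abelian group. Then Δ(a) lies in the σ-invariant subgroup T^σ = {x ∈ T : σx = x} for every a ∈ A, the image N(T) of the norm map is contained in T^σ, and the map A → T^σ / N(T) sending a to the class of Δ(a) is a homomorphism of abelian groups (the algebraic Tate-valued Frobenius, with target the Tate cohomology group Ĥ^0(C_p; A^{⊗p})). -/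
open scoped TensorProduct

/-- The subgroup `T^σ = {x ∈ T : σ x = x}` of `σ`-invariants. -/
noncomputable def invariants (p : ℕ) (A : Type*) [AddCommGroup A] :
    Submodule ℤ (tensorPow p A) :=
  LinearMap.ker (cyclicPerm p A - LinearMap.id)

/-- The image `N(T)` of the norm map, viewed inside the invariants `T^σ`. -/
noncomputable def normImageIn (p : ℕ) (A : Type*) [AddCommGroup A] :
    Submodule ℤ (invariants p A) :=
  (LinearMap.range (normMap p A)).comap (invariants p A).subtype

open scoped Fin.IntCast Fin.NatCast Fin.CommRing

section Aux

variable {p : ℕ} {A : Type*} [AddCommGroup A]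

lemma cyclicPerm_tprod (f : Fin p → A) :
    cyclicPerm p A (PiTensorProduct.tprod ℤ f)
      = PiTensorProduct.tprod ℤ (fun i => f ((finRotate p).symm i)) := by
  simp [cyclicPerm]

lemma cyclicPerm_pow_tprod (k : ℕ) (f : Fin p → A) :
    (cyclicPerm p A ^ k) (PiTensorProduct.tprod ℤ f)
      = PiTensorProduct.tprod ℤ (fun i => f (((finRotate p ^ k)⁻¹ : Equiv.Perm (Fin p)) i)) := by
  induction k generalizing f with
  | zero => simp
  | succ k ih =>
    rw [pow_succ, Module.End.mul_apply, cyclicPerm_tprod, ih]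
    congr 1
    funext i
    rw [pow_succ, mul_inv_rev, Equiv.Perm.mul_apply]
    rfl

lemma finRotate_pow_apply {n : ℕ} (k : ℕ) (i : Fin (n + 1)) :
    ((finRotate (n + 1)) ^ k) i = i + (k : Fin (n + 1)) := by
  induction k with
  | zero => simp
  | succ k ih =>
    rw [pow_succ', Equiv.Perm.mul_apply, ih, finRotate_succ_apply]
    push_cast
    ring

lemma finRotate_pow_self {n : ℕ} : (finRotate (n + 1)) ^ (n + 1) = 1 := by
  ext i
  rw [finRotate_pow_apply]
  simp

lemma cyclicPerm_pow_p {n : ℕ} {A : Type*} [AddCommGroup A] :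
    cyclicPerm (n + 1) A ^ (n + 1) = LinearMap.id := by
  apply PiTensorProduct.ext
  apply MultilinearMap.ext
  intro f
  rw [LinearMap.compMultilinearMap_apply, cyclicPerm_pow_tprod]
  congr 1
  funext i
  rw [finRotate_pow_self]
  rfl

/-- core freeness lemma: no nonempty proper subset of `Fin p` is invariant under a
nontrivial translation, for `p` prime. -/
lemma no_invariant_subset {n : ℕ} (hp : (n + 1).Prime) (S : Finset (Fin (n + 1)))
    (hne : S.Nonempty) (hSu : S ≠ Finset.univ) (d : Fin (n + 1)) (hd : d ≠ 0)
    (h : S.image (fun i => i + d) = S) : False := by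
  have hmem : ∀ i ∈ S, i + d ∈ S := by
    intro i hi
    rw [← h]
    exact Finset.mem_image.mpr ⟨i, hi, rfl⟩
  have claim : ∀ k : ℕ, ∀ i ∈ S, i + (k : Fin (n + 1)) * d ∈ S := by
    intro k
    induction k with
    | zero => intro i hi; simpa using hi
    | succ k ih =>
      intro i hi
      have : i + ((k : Fin (n+1)) + 1) * d = (i + (k : Fin (n+1)) * d) + d := by ring
      rw [Nat.cast_add_one, this]
      exact hmem _ (ih i hi)
  have hdv : (d : ℕ) ≠ 0 := by
    intro h0
    exact hd (Fin.ext (by simpa using h0))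
  have hco : Nat.Coprime (d : ℕ) (n + 1) := by
    have : ¬ (n + 1) ∣ (d : ℕ) := Nat.not_dvd_of_pos_of_lt (Nat.pos_of_ne_zero hdv) d.isLt
    exact (Nat.coprime_comm.mp (hp.coprime_iff_not_dvd.mpr this))
  obtain ⟨u, hu⟩ : ∃ u : Fin (n + 1), d * u = 1 := by
    have hbez := Nat.gcd_eq_gcd_ab (d : ℕ) (n + 1)
    rw [hco] at hbez
    refine ⟨((Nat.gcdA (d : ℕ) (n + 1)) : Fin (n + 1)), ?_⟩
    have := congrArg (fun z : ℤ => (z : Fin (n + 1))) hbez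
    push_cast at this
    rw [← Nat.cast_succ, Fin.natCast_self] at this
    simpa using this.symm
  apply hSu
  obtain ⟨i₀, hi₀⟩ := hne
  apply Finset.eq_univ_iff_forall.mpr
  intro x
  have hk : ((((x - i₀) * u : Fin (n+1)) : ℕ) : Fin (n + 1)) * d = x - i₀ := by
    rw [Fin.cast_val_eq_self]
    calc (x - i₀) * u * d = (x - i₀) * (d * u) := by ring
    _ = x - i₀ := by rw [hu, mul_one]
  have := claim (((x - i₀) * u : Fin (n+1)) : ℕ) i₀ hi₀
  rw [hk] at this
  simpa using this

/-- orbit-splitting induction lemma -/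
lemma orbit_sum_mem {β M : Type*} [DecidableEq β] [AddCommGroup M] [Module ℤ M]
    (P : Submodule ℤ M) (p : ℕ) (hp : 0 < p) (r : β → β) (g : β → M) :
    ∀ t : Finset β,
      (∀ S ∈ t, r S ∈ t) →
      (∀ S ∈ t, r^[p] S = S) →
      (∀ S ∈ t, ∀ j k, j < p → k < p → r^[j] S = r^[k] S → j = k) →
      (∀ S ∈ t, ∑ j ∈ Finset.range p, g (r^[j] S) ∈ P) →
      (∑ S ∈ t, g S) ∈ P := by
  intro t
  induction t using Finset.strongInduction with
  | _ t ih =>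
    intro hcl hper hfree hsum
    rcases t.eq_empty_or_nonempty with rfl | ⟨S₀, hS₀⟩
    · simp
    · have hit : ∀ S ∈ t, ∀ j : ℕ, r^[j] S ∈ t := by
        intro S hS j
        induction j with
        | zero => simpa using hS
        | succ j ihj => rw [Function.iterate_succ_apply']; exact hcl _ ihj
      have hmod : ∀ S ∈ t, ∀ m : ℕ, r^[m] S = r^[m % p] S := by
        intro S hS m
        induction m using Nat.strong_induction_on with
        | _ m ihm =>
          rcases lt_or_ge m p with hlt | hge
          · rw [Nat.mod_eq_of_lt hlt]
          · have h1 : m = (m - p) + p := by omega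
            have h2 : m % p = (m - p) % p := by
              conv_lhs => rw [h1]
              rw [Nat.add_mod_right]
            rw [h2]
            conv_lhs => rw [h1]
            rw [Function.iterate_add_apply, hper S hS]
            exact ihm (m - p) (by omega)
      set O : Finset β := (Finset.range p).image (fun j => r^[j] S₀) with hO
      have hOsub : O ⊆ t := by
        intro x hx
        obtain ⟨j, _, rfl⟩ := Finset.mem_image.mp hx
        exact hit S₀ hS₀ j
      have hOne : S₀ ∈ O := Finset.mem_image.mpr ⟨0, Finset.mem_range.mpr hp, rfl⟩
      have hOsum : ∑ x ∈ O, g x ∈ P := by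
        rw [hO, Finset.sum_image]
        · exact hsum S₀ hS₀
        · intro j hj k hk hjk
          exact hfree S₀ hS₀ j k (Finset.mem_range.mp hj) (Finset.mem_range.mp hk) hjk
      have hsplit : t = O ∪ (t \ O) := (Finset.union_sdiff_of_subset hOsub).symm
      rw [hsplit, Finset.sum_union Finset.disjoint_sdiff]
      refine Submodule.add_mem P hOsum ?_
      have hss : t \ O ⊂ t := Finset.sdiff_ssubset hOsub ⟨S₀, hOne⟩
      refine ih (t \ O) hss ?_ ?_ ?_ ?_
      · intro S hS
        have hSt := (Finset.mem_sdiff.mp hS).1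
        have hSnO := (Finset.mem_sdiff.mp hS).2
        rw [Finset.mem_sdiff]
        refine ⟨hcl S hSt, ?_⟩
        intro hrS
        apply hSnO
        obtain ⟨k, hk, hkeq⟩ := Finset.mem_image.mp hrS
        have hSeq : S = r^[p - 1] (r S) := by
          have h3 : r^[p - 1] (r S) = r^[p] S := by
            rw [← Function.iterate_succ_apply]
            congr 1
            omega
          rw [h3, hper S hSt]
        rw [hSeq, ← hkeq, ← Function.iterate_add_apply, hmod S₀ hS₀]
        exact Finset.mem_image.mpr ⟨(p - 1 + k) % p, Finset.mem_range.mpr (Nat.mod_lt _ hp), rfl⟩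
      · exact fun S hS => hper S (Finset.mem_sdiff.mp hS).1
      · exact fun S hS => hfree S (Finset.mem_sdiff.mp hS).1
      · exact fun S hS => hsum S (Finset.mem_sdiff.mp hS).1

lemma rot_iterate {n : ℕ} (k : ℕ) (S : Finset (Fin (n + 1))) :
    (fun T : Finset (Fin (n + 1)) => T.image ⇑(finRotate (n + 1)))^[k] S
      = S.image ⇑((finRotate (n + 1)) ^ k) := by
  induction k with
  | zero => simp
  | succ k ih =>
    rw [Function.iterate_succ_apply', ih, Finset.image_image]
    congr 1
    funext i
    rw [pow_succ', Equiv.Perm.mul_apply]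
    rfl

lemma piecewise_perm {n : ℕ} (S : Finset (Fin (n + 1))) (π : Equiv.Perm (Fin (n + 1)))
    (a b : A) (i : Fin (n + 1)) :
    (S.piecewise (fun _ => a) (fun _ => b) : Fin (n + 1) → A) (π⁻¹ i)
      = ((S.image ⇑π).piecewise (fun _ => a) (fun _ => b) : Fin (n + 1) → A) i := by
  have hmem : i ∈ S.image ⇑π ↔ π⁻¹ i ∈ S := by
    constructor
    · intro h
      obtain ⟨x, hx, rfl⟩ := Finset.mem_image.mp h
      simpa using hx
    · intro h
      exact Finset.mem_image.mpr ⟨π⁻¹ i, h, by simp⟩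
  by_cases h : π⁻¹ i ∈ S
  · rw [Finset.piecewise_eq_of_mem _ _ _ h, Finset.piecewise_eq_of_mem _ _ _ (hmem.mpr h)]
  · rw [Finset.piecewise_eq_of_notMem _ _ _ h,
      Finset.piecewise_eq_of_notMem _ _ _ (fun hc => h (hmem.mp hc))]

end Aux

/-- For a prime `p` and an abelian group `A`: `Δ(a)` lies in the `σ`-invariant subgroup
`T^σ`, the image of the norm map is contained in `T^σ`, and the map
`A → T^σ / N(T)`, `a ↦ [Δ(a)]`, is a homomorphism of abelian groups (the algebraic
Tate-valued Frobenius, with target the Tate cohomology group `Ĥ⁰(C_p; A^{⊗p})`). -/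
theorem tate_valued_frobenius_additive (p : ℕ) (hp : p.Prime) (A : Type*) [AddCommGroup A] :
    (∀ a : A, cyclicPerm p A (diagEl p A a) = diagEl p A a) ∧
    (∀ x : tensorPow p A, cyclicPerm p A (normMap p A x) = normMap p A x) ∧
    ∃ hdiag : ∀ a : A, diagEl p A a ∈ invariants p A,
      ∀ a b : A,
        (Submodule.Quotient.mk ⟨diagEl p A (a + b), hdiag (a + b)⟩ :
            invariants p A ⧸ normImageIn p A)
          = Submodule.Quotient.mk ⟨diagEl p A a, hdiag a⟩
            + Submodule.Quotient.mk ⟨diagEl p A b, hdiag b⟩ := by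
  obtain ⟨n, rfl⟩ : ∃ n, p = n + 1 := ⟨p - 1, by have := hp.pos; omega⟩
  set p := n + 1 with hpdef
  -- part 1
  have h1 : ∀ a : A, cyclicPerm p A (diagEl p A a) = diagEl p A a := by
    intro a
    rw [diagEl, cyclicPerm_tprod]
  -- part 2
  have h2 : ∀ x : tensorPow p A, cyclicPerm p A (normMap p A x) = normMap p A x := by
    intro x
    set f : ℕ → tensorPow p A := fun j => (cyclicPerm p A ^ j) x with hf
    have hN : normMap p A x = ∑ j ∈ Finset.range p, f j := by
      rw [normMap, LinearMap.sum_apply]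
    have hstep : ∀ j, cyclicPerm p A (f j) = f (j + 1) := by
      intro j
      rw [hf]
      simp only
      rw [← Module.End.mul_apply, ← pow_succ']
    have hfp : f p = x := by rw [hf]; show (cyclicPerm (n + 1) A ^ (n + 1)) x = x; rw [cyclicPerm_pow_p]; rfl
    have hf0 : f 0 = x := by rw [hf]; simp
    rw [hN, map_sum]
    simp_rw [hstep]
    have hs1 := Finset.sum_range_succ' f p
    have hs2 := Finset.sum_range_succ f p
    have : (∑ j ∈ Finset.range p, f (j + 1)) + f 0 = (∑ j ∈ Finset.range p, f j) + f p :=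
      hs1.symm.trans hs2
    rw [hfp, hf0] at this
    exact add_right_cancel this
  -- diagonal elements are invariant
  have hdiag : ∀ a : A, diagEl p A a ∈ invariants p A := by
    intro a
    rw [invariants, LinearMap.mem_ker, LinearMap.sub_apply, h1 a, LinearMap.id_apply, sub_self]
  refine ⟨h1, h2, hdiag, ?_⟩
  intro a b
  -- the key computation
  have key : diagEl p A (a + b) - (diagEl p A a + diagEl p A b)
      ∈ LinearMap.range (normMap p A) := by
    set g : Finset (Fin p) → tensorPow p A :=
      fun S => PiTensorProduct.tprod ℤ (S.piecewise (fun _ => a) (fun _ => b)) with hg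
    have hsum : diagEl p A (a + b) = ∑ S : Finset (Fin p), g S := by
      rw [diagEl]
      exact (PiTensorProduct.tprod ℤ).map_add_univ (fun _ => a) (fun _ => b)
    have hguniv : g Finset.univ = diagEl p A a := by
      rw [hg]; simp [diagEl]
    have hgempty : g ∅ = diagEl p A b := by
      rw [hg]; simp [diagEl]
    set t' : Finset (Finset (Fin p)) :=
      ((Finset.univ : Finset (Finset (Fin p))).erase Finset.univ).erase ∅ with ht'
    have hmemt : ∀ S : Finset (Fin p), S ∈ t' ↔ (S ≠ ∅ ∧ S ≠ Finset.univ) := by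
      intro S
      rw [ht']
      simp [Finset.mem_erase]
    have hunivne : (∅ : Finset (Fin p)) ≠ Finset.univ :=
      fun hc => absurd hc.symm (Finset.univ_nonempty.ne_empty)
    have e1 : ∑ S : Finset (Fin p), g S
        = g Finset.univ + ∑ S ∈ (Finset.univ : Finset (Finset (Fin p))).erase Finset.univ, g S :=
      (Finset.add_sum_erase _ g (Finset.mem_univ _)).symm
    have e2 : ∑ S ∈ (Finset.univ : Finset (Finset (Fin p))).erase Finset.univ, g S
        = g ∅ + ∑ S ∈ t', g S := by
      rw [ht']
      exact (Finset.add_sum_erase _ g (Finset.mem_erase.mpr ⟨hunivne, Finset.mem_univ _⟩)).symm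
    have hdiff : diagEl p A (a + b) - (diagEl p A a + diagEl p A b) = ∑ S ∈ t', g S := by
      rw [hsum, e1, e2, hguniv, hgempty]
      abel
    rw [hdiff]
    set r : Finset (Fin p) → Finset (Fin p) := fun S => S.image ⇑(finRotate p) with hr
    have hrinj : Function.Injective r :=
      Finset.image_injective (finRotate p).injective
    have hriter : ∀ (k : ℕ) (S : Finset (Fin p)), r^[k] S = S.image ⇑((finRotate p) ^ k) := by
      intro k S
      rw [hr]
      exact rot_iterate k S
    -- freeness
    have hfreecore : ∀ S : Finset (Fin p), S ≠ ∅ → S ≠ Finset.univ →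
        ∀ d : ℕ, 0 < d → d < p → r^[d] S ≠ S := by
      intro S hS0 hSu d hd0 hdp hc
      have himg : r^[d] S = S.image (fun i => i + (d : Fin p)) := by
        rw [hriter]
        congr 1
        funext i
        exact finRotate_pow_apply d i
      have : S.image (fun i => i + (d : Fin p)) = S := by rw [← himg, hc]
      refine no_invariant_subset hp S (Finset.nonempty_of_ne_empty hS0) hSu (d : Fin p) ?_ this
      intro hdz
      have : ((d : Fin p) : ℕ) = d := Fin.val_cast_of_lt hdp
      rw [hdz] at this
      simp at this
      omega
    apply orbit_sum_mem (LinearMap.range (normMap p A)) p (by omega) r g t'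
    · -- closure
      intro S hS
      obtain ⟨hS0, hSu⟩ := (hmemt S).mp hS
      rw [hmemt]
      constructor
      · intro hc
        have hc' : Finset.image (⇑(finRotate p)) S = ∅ := hc
        exact hS0 (Finset.image_eq_empty.mp hc')
      · intro hc
        have hc' : Finset.image (⇑(finRotate p)) S = Finset.univ := hc
        apply hSu
        have hcard : S.card = Fintype.card (Fin p) := by
          rw [← Finset.card_image_of_injective S (finRotate p).injective, hc',
            Finset.card_univ]
        exact (Finset.card_eq_iff_eq_univ _).mp hcard
    · -- periodicity
      intro S hS
      rw [hriter, finRotate_pow_self]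
      simp
    · -- freeness
      intro S hS j k hj hk hjk
      obtain ⟨hS0, hSu⟩ := (hmemt S).mp hS
      rcases lt_trichotomy j k with h | h | h
      · exfalso
        have : r^[j] (r^[k - j] S) = r^[j] S := by
          rw [← Function.iterate_add_apply]
          rw [show j + (k - j) = k by omega]
          exact hjk.symm
        have hd := Function.Injective.iterate hrinj j this
        exact hfreecore S hS0 hSu (k - j) (by omega) (by omega) hd
      · exact h
      · exfalso
        have : r^[k] (r^[j - k] S) = r^[k] S := by
          rw [← Function.iterate_add_apply]
          rw [show k + (j - k) = j by omega]
          exact hjk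
        have hd := Function.Injective.iterate hrinj k this
        exact hfreecore S hS0 hSu (j - k) (by omega) (by omega) hd
    · -- orbit sums are norms
      intro S hS
      have horb : ∀ j : ℕ, g (r^[j] S) = (cyclicPerm p A ^ j) (g S) := by
        intro j
        rw [hriter, hg]
        simp only
        rw [cyclicPerm_pow_tprod]
        congr 1
        funext i
        exact (piecewise_perm S ((finRotate p) ^ j) a b i).symm
      simp_rw [horb]
      refine LinearMap.mem_range.mpr ⟨g S, ?_⟩
      rw [normMap, LinearMap.sum_apply]
  -- conclude in the quotient
  rw [← Submodule.Quotient.mk_add, Submodule.Quotient.eq]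
  rw [normImageIn, Submodule.mem_comap]
  simpa using key
end

section
/- Let k be a field and let (M_n)_{n ∈ ℤ} be a family of k-vector spaces equipped with injective k-linear maps u_n : M_n → M_{n+2}, such that M_n = 0 for all sufficiently small n. Regard M = ⊕_{n ∈ ℤ} M_n as a module over the polynomial ring k[u] (with u of degree 2 acting via the maps u_n). Then M is a free k[u]-module. More precisely, any family (e_i) of homogeneous elements of M whose images form a k-basis of M/uM is a k[u]-basis of M; in particular there is an isomorphism of graded k[u]-modules M ≅ k[u] ⊗_k (M/uM). -/
set_option linter.unusedSectionVars false


open scoped TensorProduct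
open Polynomial

/-- The submodule `uM ⊆ M`: the image of multiplication by `u = X` (of degree 2). -/
noncomputable def uM (k : Type*) [Field k] (M : Type*) [AddCommGroup M]
    [Module (Polynomial k) M] : Submodule (Polynomial k) M :=
  LinearMap.range (LinearMap.lsmul (Polynomial k) M (Polynomial.X : Polynomial k))

private lemma stepInd (P : ℤ → Prop) (n₀ : ℤ) (base : ∀ n < n₀, P n)
    (step : ∀ n : ℤ, P (n - 2) → P n) : ∀ n, P n := by
  have key : ∀ N : ℕ, ∀ n : ℤ, n < n₀ + 2 * N → P n := by
    intro N
    induction N with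
    | zero => intro n hn; exact base n (by push_cast at hn; omega)
    | succ N ih =>
      intro n hn
      by_cases h : n < n₀ + 2 * N
      · exact ih n h
      · exact step n (ih (n - 2) (by push_cast at hn h ⊢; omega))
  intro n
  exact key ((n - n₀).toNat + 1) n (by push_cast; omega)

section aux

variable {k : Type*} [Field k] {M : Type*} [AddCommGroup M] [Module k M]
  [Module (Polynomial k) M] [IsScalarTower k (Polynomial k) M]

private lemma aux_mk_smul (p : Polynomial k) (x : M) :
    (Submodule.Quotient.mk (p • x) : M ⧸ uM k M)
      = p.coeff 0 • (Submodule.Quotient.mk x : M ⧸ uM k M) := by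
  have h1 : p • x = p.coeff 0 • x + (Polynomial.X : Polynomial k) • (p.divX • x) := by
    conv_lhs => rw [← Polynomial.X_mul_divX_add p]
    rw [add_smul, mul_smul, ← Polynomial.algebraMap_eq, algebraMap_smul, add_comm]
  have h2 : (Submodule.Quotient.mk ((Polynomial.X : Polynomial k) • (p.divX • x))
      : M ⧸ uM k M) = 0 := by
    rw [Submodule.Quotient.mk_eq_zero]
    exact ⟨p.divX • x, rfl⟩
  rw [h1, Submodule.Quotient.mk_add, h2, add_zero, Submodule.Quotient.mk_smul]

private lemma aux_mk_lincomb {ι : Type*} (e : ι → M) (ℓ : ι →₀ Polynomial k) :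
    (Submodule.Quotient.mk (Finsupp.linearCombination (Polynomial k) e ℓ) : M ⧸ uM k M)
      = Finsupp.linearCombination k (fun i => (Submodule.Quotient.mk (e i) : M ⧸ uM k M))
          (ℓ.mapRange (fun p => p.coeff 0) (Polynomial.coeff_zero 0)) := by
  rw [Finsupp.linearCombination_apply, Finsupp.linearCombination_apply,
    Finsupp.sum_mapRange_index (by simp)]
  have : (Submodule.Quotient.mk (ℓ.sum fun i p => p • e i) : M ⧸ uM k M)
      = ((uM k M).mkQ.restrictScalars k) (ℓ.sum fun i p => p • e i) := rfl
  rw [this, map_finsuppSum]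
  refine Finsupp.sum_congr fun i _ => ?_
  exact aux_mk_smul (ℓ i) (e i)

private lemma aux_divX_step {ι : Type*}
    (hinj : ∀ x : M, (Polynomial.X : Polynomial k) • x = 0 → x = 0) (e : ι → M)
    (hli : LinearIndependent k
      (fun i : ι => (Submodule.Quotient.mk (e i) : M ⧸ uM k M)))
    (ℓ : ι →₀ Polynomial k) (h : Finsupp.linearCombination (Polynomial k) e ℓ = 0) :
    ∃ ℓ' : ι →₀ Polynomial k, (∀ i, ℓ i = Polynomial.X * ℓ' i) ∧
      Finsupp.linearCombination (Polynomial k) e ℓ' = 0 := by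
  have h0 : ℓ.mapRange (fun p => p.coeff 0) (Polynomial.coeff_zero 0) = 0 := by
    apply linearIndependent_iff.mp hli
    rw [← aux_mk_lincomb, h, Submodule.Quotient.mk_zero]
  have hc : ∀ i, (ℓ i).coeff 0 = 0 := by
    intro i
    have := DFunLike.congr_fun h0 i
    simpa [Finsupp.mapRange_apply] using this
  have hX : ∀ i, ℓ i = Polynomial.X * (ℓ i).divX := by
    intro i
    conv_lhs => rw [← Polynomial.X_mul_divX_add (ℓ i)]
    rw [hc, map_zero, add_zero]
  refine ⟨ℓ.mapRange Polynomial.divX Polynomial.divX_zero, fun i => by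
    rw [Finsupp.mapRange_apply]; exact hX i, ?_⟩
  apply hinj
  have : (Polynomial.X : Polynomial k) •
      Finsupp.linearCombination (Polynomial k) e (ℓ.mapRange Polynomial.divX Polynomial.divX_zero)
      = Finsupp.linearCombination (Polynomial k) e ℓ := by
    rw [Finsupp.linearCombination_apply, Finsupp.linearCombination_apply,
      Finsupp.sum_mapRange_index (by simp), Finsupp.smul_sum]
    refine Finsupp.sum_congr fun i _ => ?_
    rw [← mul_smul, ← hX i]
  rw [this, h]

private lemma aux_li {ι : Type*}
    (hinj : ∀ x : M, (Polynomial.X : Polynomial k) • x = 0 → x = 0) (e : ι → M)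
    (hli : LinearIndependent k
      (fun i : ι => (Submodule.Quotient.mk (e i) : M ⧸ uM k M))) :
    LinearIndependent (Polynomial k) e := by
  rw [linearIndependent_iff]
  suffices H : ∀ N : ℕ, ∀ ℓ : ι →₀ Polynomial k,
      (∑ i ∈ ℓ.support, (ℓ i).natDegree) ≤ N →
      Finsupp.linearCombination (Polynomial k) e ℓ = 0 → ℓ = 0 from
    fun ℓ h => H _ ℓ le_rfl h
  intro N
  induction N using Nat.strong_induction_on with
  | _ N IH =>
    intro ℓ hdeg h
    obtain ⟨ℓ', hXdvd, h'⟩ := aux_divX_step hinj e hli ℓ h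
    by_cases hz : ℓ = 0
    · exact hz
    · have hne : ∀ i, ℓ i ≠ 0 → ℓ' i ≠ 0 := by
        intro i hi hzi
        exact hi (by rw [hXdvd i, hzi, mul_zero])
      have hsupp : ℓ'.support = ℓ.support := by
        ext i
        simp only [Finsupp.mem_support_iff]
        constructor
        · intro hi hzi
          rw [hXdvd i] at hzi
          rcases mul_eq_zero.mp hzi with hh | hh
          · exact Polynomial.X_ne_zero hh
          · exact hi hh
        · exact hne i
      have hdegree : ∀ i, ℓ i ≠ 0 → (ℓ' i).natDegree < (ℓ i).natDegree := by
        intro i hi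
        have h1 : ℓ' i ≠ 0 := hne i hi
        have : (ℓ i).natDegree = (ℓ' i).natDegree + 1 := by
          rw [hXdvd i, Polynomial.natDegree_mul Polynomial.X_ne_zero h1,
            Polynomial.natDegree_X]
          omega
        omega
      have hlt : (∑ i ∈ ℓ'.support, (ℓ' i).natDegree)
          < ∑ i ∈ ℓ.support, (ℓ i).natDegree := by
        rw [hsupp]
        obtain ⟨i₀, hi₀⟩ := Finsupp.support_nonempty_iff.mpr hz
        refine Finset.sum_lt_sum (fun i hi => ?_) ⟨i₀, hi₀, ?_⟩
        · exact le_of_lt (hdegree i (Finsupp.mem_support_iff.mp hi))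
        · exact hdegree i₀ (Finsupp.mem_support_iff.mp hi₀)
      have h0 : ℓ' = 0 := IH _ (lt_of_lt_of_le hlt hdeg) ℓ' le_rfl h'
      ext i
      rw [hXdvd i, h0]
      simp

variable (Mgr : ℤ → Submodule k M)

private noncomputable def Pl (hinternal : DirectSum.IsInternal Mgr) (m : ℤ) : M →ₗ[k] M :=
  (Mgr m).subtype ∘ₗ (DirectSum.component k ℤ (fun n => ↥(Mgr n)) m) ∘ₗ
    ((LinearEquiv.ofBijective (DirectSum.coeLinearMap Mgr) hinternal).symm.toLinearMap)

private lemma Pl_apply (hinternal : DirectSum.IsInternal Mgr) (m : ℤ) (x : M) :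
    Pl Mgr hinternal m x
      = (((LinearEquiv.ofBijective (DirectSum.coeLinearMap Mgr) hinternal).symm x) m : M) :=
  rfl

private lemma Pl_of_mem (hinternal : DirectSum.IsInternal Mgr) {n : ℤ} {x : M}
    (hx : x ∈ Mgr n) : Pl Mgr hinternal n x = x := by
  rw [Pl_apply, hinternal.ofBijective_coeLinearMap_of_mem hx]

private lemma Pl_of_mem_ne (hinternal : DirectSum.IsInternal Mgr) {n m : ℤ} (hmn : n ≠ m)
    {x : M} (hx : x ∈ Mgr n) : Pl Mgr hinternal m x = 0 := by
  rw [Pl_apply, hinternal.ofBijective_coeLinearMap_of_mem_ne hmn hx,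
    ZeroMemClass.coe_zero]

private lemma Pl_mem (hinternal : DirectSum.IsInternal Mgr) (m : ℤ) (x : M) :
    Pl Mgr hinternal m x ∈ Mgr m := by
  rw [Pl_apply]; exact Subtype.coe_prop _

private lemma Pl_smul_X (hinternal : DirectSum.IsInternal Mgr)
    (hshift : ∀ (n : ℤ), ∀ x ∈ Mgr n, (Polynomial.X : Polynomial k) • x ∈ Mgr (n + 2))
    (m : ℤ) (x : M) :
    Pl Mgr hinternal m ((Polynomial.X : Polynomial k) • x)
      = (Polynomial.X : Polynomial k) • Pl Mgr hinternal (m - 2) x := by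
  have hx : x ∈ ⨆ n, Mgr n := by
    rw [hinternal.submodule_iSup_eq_top]; trivial
  refine Submodule.iSup_induction Mgr (motive := fun y =>
    Pl Mgr hinternal m ((Polynomial.X : Polynomial k) • y)
      = (Polynomial.X : Polynomial k) • Pl Mgr hinternal (m - 2) y) hx ?_ ?_ ?_
  · intro n y hy
    have h2 : (Polynomial.X : Polynomial k) • y ∈ Mgr (n + 2) := hshift n y hy
    by_cases hm : m = n + 2
    · subst hm
      rw [Pl_of_mem Mgr hinternal h2]
      have hn : n + 2 - 2 = n := by ring
      rw [hn, Pl_of_mem Mgr hinternal hy]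
    · rw [Pl_of_mem_ne Mgr hinternal (fun hh => hm hh.symm) h2,
        Pl_of_mem_ne Mgr hinternal (fun hh => hm (by omega)) hy, smul_zero]
  · show Pl Mgr hinternal m ((Polynomial.X : Polynomial k) • (0 : M)) = _
    rw [smul_zero, map_zero, map_zero, smul_zero]
  · intro a b ha hb
    show Pl Mgr hinternal m ((Polynomial.X : Polynomial k) • (a + b)) = _
    rw [smul_add, map_add, map_add, ha, hb, smul_add]

private lemma aux_decomp {ι : Type*}
    (hinternal : DirectSum.IsInternal Mgr)
    (hshift : ∀ (n : ℤ), ∀ x ∈ Mgr n, (Polynomial.X : Polynomial k) • x ∈ Mgr (n + 2))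
    (d : ι → ℤ) (e : ι → M)
    (hhom : ∀ i, e i ∈ Mgr (d i))
    (hli : LinearIndependent k
      (fun i : ι => (Submodule.Quotient.mk (e i) : M ⧸ uM k M)))
    (hspan : Submodule.span k
      (Set.range fun i : ι => (Submodule.Quotient.mk (e i) : M ⧸ uM k M)) = ⊤)
    (n : ℤ) (x : M) (hx : x ∈ Mgr n) :
    ∃ c : ι →₀ k, (∀ i ∈ c.support, d i = n) ∧ ∃ y ∈ Mgr (n - 2),
      x = (∑ i ∈ c.support, c i • e i) + (Polynomial.X : Polynomial k) • y := by
  have hx' : (Submodule.Quotient.mk x : M ⧸ uM k M) ∈ Submodule.span k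
      (Set.range fun i : ι => (Submodule.Quotient.mk (e i) : M ⧸ uM k M)) := by
    rw [hspan]; trivial
  rw [Finsupp.mem_span_range_iff_exists_finsupp] at hx'
  obtain ⟨c, hc⟩ := hx'
  set s : M := ∑ i ∈ c.support, c i • e i with hs
  have hmk : (Submodule.Quotient.mk s : M ⧸ uM k M)
      = Submodule.Quotient.mk x := by
    rw [← hc, Finsupp.sum]
    have : (Submodule.Quotient.mk s : M ⧸ uM k M)
        = ((uM k M).mkQ.restrictScalars k) s := rfl
    rw [this, hs, map_sum]
    refine Finset.sum_congr rfl fun i _ => ?_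
    rw [LinearMap.map_smul]
    rfl
  have hmem : x - s ∈ uM k M := by
    rw [← Submodule.Quotient.mk_eq_zero, Submodule.Quotient.mk_sub, hmk, sub_self]
  obtain ⟨y₀, hy₀⟩ := hmem
  -- hy₀ : X • y₀ = x - s
  have hy₀' : (Polynomial.X : Polynomial k) • y₀ = x - s := hy₀
  have hdeg : ∀ i ∈ c.support, d i = n := by
    intro i₀ hi₀
    by_contra hne
    set m : ℤ := d i₀ with hm
    -- apply Pl m to   s = x - X • y₀
    have hPls : Pl Mgr hinternal m s
        = - ((Polynomial.X : Polynomial k) • Pl Mgr hinternal (m - 2) y₀) := by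
      have : s = x - (Polynomial.X : Polynomial k) • y₀ := by
        rw [hy₀', sub_sub_cancel]
      rw [this, map_sub, Pl_smul_X Mgr hinternal hshift,
        Pl_of_mem_ne Mgr hinternal (fun hh => hne hh.symm) hx, zero_sub]
    have hPls2 : Pl Mgr hinternal m s
        = ∑ i ∈ c.support, (if d i = m then c i else 0) • e i := by
      rw [hs, map_sum]
      refine Finset.sum_congr rfl fun i _ => ?_
      rw [LinearMap.map_smul]
      by_cases hdi : d i = m
      · rw [if_pos hdi, Pl_of_mem Mgr hinternal (hdi ▸ hhom i)]
      · rw [if_neg hdi, Pl_of_mem_ne Mgr hinternal hdi (hhom i), smul_zero, zero_smul]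
    have hzero : (∑ i ∈ c.support,
        (if d i = m then c i else 0) • (Submodule.Quotient.mk (e i) : M ⧸ uM k M)) = 0 := by
      have hmm : (Submodule.Quotient.mk
          ((Polynomial.X : Polynomial k) • Pl Mgr hinternal (m - 2) y₀) : M ⧸ uM k M) = 0 :=
        (Submodule.Quotient.mk_eq_zero (uM k M)).mpr ⟨Pl Mgr hinternal (m - 2) y₀, rfl⟩
      have : (Submodule.Quotient.mk (Pl Mgr hinternal m s) : M ⧸ uM k M) = 0 := by
        rw [hPls, Submodule.Quotient.mk_neg, hmm, neg_zero]
      rw [hPls2] at this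
      rw [← this]
      have h2 : (Submodule.Quotient.mk (∑ i ∈ c.support,
          (if d i = m then c i else 0) • e i) : M ⧸ uM k M)
          = ((uM k M).mkQ.restrictScalars k) _ := rfl
      rw [h2, map_sum]
      refine Finset.sum_congr rfl fun i _ => ?_
      rw [LinearMap.map_smul]
      rfl
    have := linearIndependent_iff'.mp hli c.support
      (fun i => if d i = m then c i else 0) hzero i₀ hi₀
    simp only [if_pos hm.symm] at this
    exact Finsupp.mem_support_iff.mp hi₀ this
  -- now s ∈ Mgr n
  have hsmem : s ∈ Mgr n := by
    refine Submodule.sum_mem _ fun i hi => Submodule.smul_mem _ _ ?_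
    rw [← hdeg i hi]; exact hhom i
  have hxs : x - s ∈ Mgr n := Submodule.sub_mem _ hx hsmem
  have key : x - s = (Polynomial.X : Polynomial k) • Pl Mgr hinternal (n - 2) y₀ := by
    conv_lhs => rw [← Pl_of_mem Mgr hinternal hxs]
    rw [← hy₀', Pl_smul_X Mgr hinternal hshift]
  exact ⟨c, hdeg, Pl Mgr hinternal (n - 2) y₀, Pl_mem Mgr hinternal _ _,
    by rw [← key, ← hs]; abel⟩

end aux

/-- Let `k` be a field and `M` a ℤ-graded module over `k[u]` with `u` of degree 2
(the grading given by a family of `k`-subspaces `Mgr n` forming an internal direct sum with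
`u • Mgr n ⊆ Mgr (n+2)`), such that multiplication by `u` is injective (torsion-freeness)
and `Mgr n = 0` for all sufficiently small `n` (boundedness below).  Then any family
`(e i)` of homogeneous elements of `M` whose images form a `k`-basis of `M/uM` is a
`k[u]`-basis of `M`; in particular `M` is a free `k[u]`-module and there is an isomorphism
of graded `k[u]`-modules `M ≅ k[u] ⊗_k (M/uM)` (where `X^j ⊗ (M/uM)_i` sits in
degree `i + 2j`). -/
theorem free_over_ku_of_torsionFree_boundedBelow
    (k : Type*) [Field k] (M : Type*) [AddCommGroup M] [Module k M]
    [Module (Polynomial k) M] [IsScalarTower k (Polynomial k) M]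
    (Mgr : ℤ → Submodule k M)
    (hinternal : DirectSum.IsInternal Mgr)
    (hshift : ∀ (n : ℤ), ∀ x ∈ Mgr n, (Polynomial.X : Polynomial k) • x ∈ Mgr (n + 2))
    (hinj : ∀ x : M, (Polynomial.X : Polynomial k) • x = 0 → x = 0)
    (hbdd : ∃ n₀ : ℤ, ∀ n < n₀, Mgr n = ⊥)
    (ι : Type*) (d : ι → ℤ) (e : ι → M)
    (hhom : ∀ i, e i ∈ Mgr (d i))
    (hli : LinearIndependent k
      (fun i : ι => (Submodule.Quotient.mk (e i) : M ⧸ uM k M)))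
    (hspan : Submodule.span k
      (Set.range fun i : ι => (Submodule.Quotient.mk (e i) : M ⧸ uM k M)) = ⊤) :
    LinearIndependent (Polynomial k) e ∧
    Submodule.span (Polynomial k) (Set.range e) = ⊤ ∧
    Module.Free (Polynomial k) M ∧
    ∃ f : M ≃ₗ[Polynomial k] (Polynomial k ⊗[k] (M ⧸ uM k M)),
      ∀ (n : ℤ) (x : M), x ∈ Mgr n →
        f x ∈ Submodule.span k
          {z : Polynomial k ⊗[k] (M ⧸ uM k M) |
            ∃ (j : ℕ) (q : M ⧸ uM k M),
              q ∈ (Mgr (n - 2 * (j : ℤ))).map ((uM k M).mkQ.restrictScalars k) ∧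
              z = (Polynomial.X ^ j : Polynomial k) ⊗ₜ[k] q} := by
  obtain ⟨n₀, hbdd⟩ := hbdd
  have hLI : LinearIndependent (Polynomial k) e := aux_li hinj e hli
  have hhomspan : ∀ n : ℤ, ∀ x ∈ Mgr n,
      x ∈ Submodule.span (Polynomial k) (Set.range e) := by
    refine stepInd _ n₀ (fun n hn x hx => ?_) (fun n ih x hx => ?_)
    · rw [hbdd n hn, Submodule.mem_bot] at hx
      rw [hx]; exact zero_mem _
    · obtain ⟨c, hdeg, y, hy, hxeq⟩ :=
        aux_decomp Mgr hinternal hshift d e hhom hli hspan n x hx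
      rw [hxeq]
      refine add_mem (Submodule.sum_mem _ fun i _ => ?_)
        (Submodule.smul_mem _ _ (ih y hy))
      rw [← algebraMap_smul (Polynomial k) (c i) (e i)]
      exact Submodule.smul_mem _ _ (Submodule.subset_span (Set.mem_range_self i))
  have hSpan : Submodule.span (Polynomial k) (Set.range e) = ⊤ := by
    rw [eq_top_iff]
    intro x _
    have hx : x ∈ ⨆ n, Mgr n := by rw [hinternal.submodule_iSup_eq_top]; trivial
    exact Submodule.iSup_induction Mgr
      (motive := fun y => y ∈ Submodule.span (Polynomial k) (Set.range e)) hx hhomspan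
      (zero_mem _) (fun a b ha hb => add_mem ha hb)
  let bE : Module.Basis ι (Polynomial k) M := Module.Basis.mk hLI (by rw [hSpan])
  let b : Module.Basis ι k (M ⧸ uM k M) := Module.Basis.mk hli (by rw [hspan])
  let bT : Module.Basis ι (Polynomial k) (Polynomial k ⊗[k] (M ⧸ uM k M)) :=
    Algebra.TensorProduct.basis (Polynomial k) b
  let f : M ≃ₗ[Polynomial k] (Polynomial k ⊗[k] (M ⧸ uM k M)) := bE.equiv bT (Equiv.refl ι)
  have hfe : ∀ i, f (e i) = (1 : Polynomial k) ⊗ₜ[k]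
      (Submodule.Quotient.mk (e i) : M ⧸ uM k M) := by
    intro i
    have h1 : f (bE i) = bT (Equiv.refl ι i) := bE.equiv_apply i bT (Equiv.refl ι)
    simp only [bE, bT, b, Module.Basis.mk_apply, Equiv.refl_apply,
      Algebra.TensorProduct.basis_apply] at h1
    exact h1
  refine ⟨hLI, hSpan, Module.Free.of_basis bE, f, ?_⟩
  refine stepInd _ n₀ (fun n hn x hx => ?_) (fun n ih x hx => ?_)
  · rw [hbdd n hn, Submodule.mem_bot] at hx
    rw [hx, map_zero]; exact zero_mem _
  · obtain ⟨c, hdeg, y, hy, hxeq⟩ :=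
      aux_decomp Mgr hinternal hshift d e hhom hli hspan n x hx
    rw [hxeq, map_add]
    refine add_mem ?_ ?_
    · rw [map_sum]
      refine Submodule.sum_mem _ fun i hi => ?_
      have hsm : f (c i • e i) = c i • f (e i) :=
        f.toLinearMap.map_smul_of_tower (c i) (e i)
      rw [hsm, hfe i]
      refine Submodule.smul_mem _ _ (Submodule.subset_span ?_)
      refine ⟨0, Submodule.Quotient.mk (e i), ?_, by rw [pow_zero]⟩
      refine ⟨e i, ?_, rfl⟩
      rw [show n - 2 * ((0 : ℕ) : ℤ) = n by push_cast; ring, ← hdeg i hi]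
      exact hhom i
    · rw [map_smul]
      have hfy := ih y hy
      refine Submodule.span_induction
        (p := fun z _ => (Polynomial.X : Polynomial k) • z ∈ Submodule.span k
          {z : Polynomial k ⊗[k] (M ⧸ uM k M) |
            ∃ (j : ℕ) (q : M ⧸ uM k M),
              q ∈ (Mgr (n - 2 * (j : ℤ))).map ((uM k M).mkQ.restrictScalars k) ∧
              z = (Polynomial.X ^ j : Polynomial k) ⊗ₜ[k] q})
        ?_ ?_ ?_ ?_ hfy
      · rintro z ⟨j, q, hq, rfl⟩
        refine Submodule.subset_span ⟨j + 1, q, ?_, ?_⟩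
        · rw [show n - 2 * (((j + 1 : ℕ)) : ℤ) = n - 2 - 2 * (j : ℤ) by push_cast; ring]
          exact hq
        · rw [TensorProduct.smul_tmul', smul_eq_mul, ← pow_succ']
      · simp only [smul_zero]; exact zero_mem _
      · intro z w _ _ hz hw
        simp only [smul_add]; exact add_mem hz hw
      · intro a z _ hz
        simp only [smul_comm ((Polynomial.X : Polynomial k)) a z]
        exact Submodule.smul_mem _ _ hz
end
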